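/- Let Ω ⊆ [0,1]^d be Peano–Jordan measurable. For a multi-index n, the number of indices i with 1 ≤ i ≤ n such that the two grid points i/n and i/(n+1) are separated by the boundary of Ω (i.e., exactly one of them lies in Ω) is o(n_1⋯n_d) as min(n) → ∞. -/

import Mathlib

open MeasureTheory Set Filter Metric
open scoped ENNReal

/-- A preconnected set meeting both `t` and its complement meets the frontier of `t`. -/
lemma aux_frontier_hit {X : Type*} [TopologicalSpace X] {s t : Set X}
    (hs : IsPreconnected s) {a b : X} (ha : a ∈ s) (hb : b ∈ s)
    (hat : a ∈ t) (hbt : b ∉ t) : (s ∩ frontier t).Nonempty := by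
  rcases (s ∩ frontier t).eq_empty_or_nonempty with h | h
  · exfalso
    have hsub : s ⊆ interior t ∪ interior tᶜ := by
      intro x hx
      by_cases hxi : x ∈ interior t
      · exact Or.inl hxi
      · refine Or.inr ?_
        rw [interior_compl, mem_compl_iff]
        intro hxc
        have hxf : x ∈ frontier t := by
          rw [← closure_diff_interior]; exact ⟨hxc, hxi⟩
        exact absurd (Set.mem_inter hx hxf) (by rw [h]; exact notMem_empty x)
    have hdisj : Disjoint (interior t) (interior tᶜ) :=
      (disjoint_compl_right (a := t)).mono interior_subset interior_subset
    rcases hs.subset_or_subset isOpen_interior isOpen_interior hdisj hsub with h1 | h1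
    · exact hbt (interior_subset (h1 hb))
    · exact absurd hat (by simpa using interior_subset (h1 ha))
  · exact h

lemma key_bound (d : ℕ) (Ω : Set (Fin d → ℝ)) (hΩsub : Ω ⊆ Set.Icc 0 1)
    (n : Fin d → ℕ) (hn : ∀ j, 1 ≤ n j) :
    (Set.ncard {i : Fin d → ℕ |
        (∀ j, 1 ≤ i j ∧ i j ≤ n j) ∧
          ¬(((fun j => (i j : ℝ) / (n j : ℝ)) ∈ Ω) ↔
            ((fun j => (i j : ℝ) / ((n j : ℝ) + 1)) ∈ Ω))} : ℝ) / ∏ j, (n j : ℝ)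
      ≤ (volume (Metric.cthickening (2 * ∑ j, ((n j : ℝ))⁻¹) (frontier Ω))).toReal := by
  set M := {i : Fin d → ℕ |
      (∀ j, 1 ≤ i j ∧ i j ≤ n j) ∧
        ¬(((fun j => (i j : ℝ) / (n j : ℝ)) ∈ Ω) ↔
          ((fun j => (i j : ℝ) / ((n j : ℝ) + 1)) ∈ Ω))} with hM
  set ε := ∑ j, ((n j : ℝ))⁻¹ with hε
  have hnj : ∀ j, (0:ℝ) < n j := fun j => by exact_mod_cast hn j
  have hε0 : 0 ≤ ε := Finset.sum_nonneg fun j _ => by positivity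
  have hjε : ∀ j, ((n j : ℝ))⁻¹ ≤ ε := fun j =>
    Finset.single_le_sum (f := fun j => ((n j : ℝ))⁻¹) (fun _ _ => by positivity)
      (Finset.mem_univ j)
  have hMfin : M.Finite := by
    refine Set.Finite.subset (Set.Finite.pi (fun j => Set.finite_Iic (n j))) ?_
    intro i hi
    exact Set.mem_univ_pi.2 fun j => (hi.1 j).2
  -- grid points
  set a : (Fin d → ℕ) → (Fin d → ℝ) := fun i => fun j => (i j : ℝ) / (n j : ℝ) with ha
  set b : (Fin d → ℕ) → (Fin d → ℝ) := fun i => fun j => (i j : ℝ) / ((n j : ℝ) + 1) with hb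
  have hab : ∀ i ∈ M, dist (a i) (b i) ≤ ε := by
    intro i hi
    rw [dist_pi_le_iff hε0]
    intro j
    refine le_trans ?_ (hjε j)
    have hm := hnj j
    have hkm : (i j : ℝ) ≤ (n j : ℝ) := by exact_mod_cast (hi.1 j).2
    have hk0 : (0:ℝ) ≤ (i j : ℝ) := Nat.cast_nonneg _
    have heq : (i j : ℝ) / (n j : ℝ) - (i j : ℝ) / ((n j : ℝ) + 1)
        = (i j : ℝ) / ((n j : ℝ) * ((n j : ℝ) + 1)) := by
      field_simp
      ring
    rw [Real.dist_eq, heq, abs_of_nonneg (by positivity)]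
    rw [div_le_iff₀ (by positivity)]
    have : ((n j : ℝ))⁻¹ * ((n j : ℝ) * ((n j : ℝ) + 1)) = (n j : ℝ) + 1 := by
      field_simp
    rw [this]
    linarith
  have hc : ∀ i ∈ M, ∃ c ∈ frontier Ω, dist (a i) c ≤ ε := by
    intro i hi
    have hseg : IsPreconnected (segment ℝ (a i) (b i)) := (convex_segment (a i) (b i)).isPreconnected
    have hball : ∀ c ∈ segment ℝ (a i) (b i), dist (a i) c ≤ ε := by
      intro c hcs
      have hc' : c ∈ Metric.closedBall (a i) (dist (a i) (b i)) :=
        (convex_closedBall (a i) (dist (a i) (b i))).segment_subset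
          (Metric.mem_closedBall_self dist_nonneg)
          (by simp [Metric.mem_closedBall, dist_comm]) hcs
      rw [Metric.mem_closedBall] at hc'
      calc dist (a i) c = dist c (a i) := dist_comm _ _
        _ ≤ dist (a i) (b i) := hc'
        _ ≤ ε := hab i hi
    by_cases hA : a i ∈ Ω
    · have hB : b i ∉ Ω := fun hB => hi.2 (iff_of_true hA hB)
      obtain ⟨c, hcs, hcf⟩ := aux_frontier_hit hseg (left_mem_segment ℝ (a i) (b i))
        (right_mem_segment ℝ (a i) (b i)) hA hB
      exact ⟨c, hcf, hball c hcs⟩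
    · have hB : b i ∈ Ω := by
        by_contra hB
        exact hi.2 (iff_of_false hA hB)
      obtain ⟨c, hcs, hcf⟩ := aux_frontier_hit hseg (right_mem_segment ℝ (a i) (b i))
        (left_mem_segment ℝ (a i) (b i)) hB hA
      exact ⟨c, hcf, hball c hcs⟩
  -- cubes
  set U : (Fin d → ℕ) → Set (Fin d → ℝ) :=
    fun i => Set.pi Set.univ (fun j => Ioo (((i j : ℝ) - 1) / (n j : ℝ)) ((i j : ℝ) / (n j : ℝ)))
    with hU
  have hUmeas : ∀ i, MeasurableSet (U i) := fun i =>
    MeasurableSet.univ_pi fun j => measurableSet_Ioo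
  have hUvol : ∀ i, volume (U i) = ∏ j, ENNReal.ofReal ((n j : ℝ))⁻¹ := by
    intro i
    rw [hU, volume_pi_pi]
    refine Finset.prod_congr rfl fun j _ => ?_
    rw [Real.volume_Ioo]
    congr 1
    have h0 : (n j : ℝ) ≠ 0 := ne_of_gt (hnj j)
    field_simp
    ring
  have hUsub : ∀ i ∈ M, U i ⊆ Metric.cthickening (2 * ε) (frontier Ω) := by
    intro i hi x hx
    obtain ⟨c, hcf, hac⟩ := hc i hi
    have hxa : dist x (a i) ≤ ε := by
      rw [dist_pi_le_iff hε0]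
      intro j
      have hxj := hx j (Set.mem_univ j)
      simp only [mem_Ioo] at hxj
      have e1 : ((i j : ℝ) - 1) / (n j : ℝ) = (i j : ℝ) / (n j : ℝ) - ((n j : ℝ))⁻¹ := by
        rw [sub_div, inv_eq_one_div]
      have h2 := hjε j
      have h3 : (0:ℝ) ≤ ((n j : ℝ))⁻¹ := by positivity
      rw [Real.dist_eq, abs_le]
      constructor <;> simp only [ha] <;> [linarith [hxj.1]; linarith [hxj.2]]
    refine mem_cthickening_of_dist_le x c _ _ hcf ?_
    calc dist x c ≤ dist x (a i) + dist (a i) c := dist_triangle _ _ _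
      _ ≤ ε + ε := add_le_add hxa hac
      _ = 2 * ε := by ring
  set T := hMfin.toFinset with hT
  have hdisj : (T : Set (Fin d → ℕ)).PairwiseDisjoint U := by
    intro i _ i' _ hne
    obtain ⟨j, hj⟩ : ∃ j, i j ≠ i' j := Function.ne_iff.1 hne
    refine Set.disjoint_left.2 fun x hx hx' => ?_
    have h1 := hx j (Set.mem_univ j)
    have h2 := hx' j (Set.mem_univ j)
    simp only [mem_Ioo] at h1 h2
    have hm := hnj j
    rcases lt_or_gt_of_ne hj with h | h
    · have hcast : (i j : ℝ) ≤ (i' j : ℝ) - 1 := by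
        have : (i j : ℕ) + 1 ≤ i' j := h
        have := (Nat.cast_le (α := ℝ)).2 this
        push_cast at this
        linarith
      have hmid : (i j : ℝ) / (n j : ℝ) ≤ ((i' j : ℝ) - 1) / (n j : ℝ) :=
        (div_le_div_iff_of_pos_right hm).2 hcast
      linarith [h1.2, h2.1]
    · have hcast : (i' j : ℝ) ≤ (i j : ℝ) - 1 := by
        have : (i' j : ℕ) + 1 ≤ i j := h
        have := (Nat.cast_le (α := ℝ)).2 this
        push_cast at this
        linarith
      have hmid : (i' j : ℝ) / (n j : ℝ) ≤ ((i j : ℝ) - 1) / (n j : ℝ) :=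
        (div_le_div_iff_of_pos_right hm).2 hcast
      linarith [h2.2, h1.1]
  have hbUnion : volume (⋃ i ∈ T, U i) = ∑ i ∈ T, volume (U i) :=
    measure_biUnion_finset hdisj fun i _ => hUmeas i
  have hsum : ∑ i ∈ T, volume (U i) = (T.card : ℝ≥0∞) * ∏ j, ENNReal.ofReal ((n j : ℝ))⁻¹ := by
    rw [Finset.sum_congr rfl fun i _ => hUvol i, Finset.sum_const, nsmul_eq_mul]
  have hsub2 : (⋃ i ∈ T, U i) ⊆ Metric.cthickening (2 * ε) (frontier Ω) :=
    Set.iUnion₂_subset fun i hi => hUsub i (hMfin.mem_toFinset.1 hi)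
  have hle : (T.card : ℝ≥0∞) * ∏ j, ENNReal.ofReal ((n j : ℝ))⁻¹
      ≤ volume (Metric.cthickening (2 * ε) (frontier Ω)) := by
    rw [← hsum, ← hbUnion]
    exact measure_mono hsub2
  have hFsub : frontier Ω ⊆ Set.Icc 0 1 := by
    have h1 : closure Ω ⊆ closure (Set.Icc (0 : Fin d → ℝ) 1) := closure_mono hΩsub
    rw [IsClosed.closure_eq isClosed_Icc] at h1
    exact subset_trans frontier_subset_closure h1
  have hFc : IsCompact (frontier Ω) :=
    IsCompact.of_isClosed_subset isCompact_Icc isClosed_frontier hFsub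
  have hVne : volume (Metric.cthickening (2 * ε) (frontier Ω)) ≠ ⊤ :=
    (hFc.cthickening).measure_lt_top.ne
  have hfinal := ENNReal.toReal_mono hVne hle
  have hlhs : ((T.card : ℝ≥0∞) * ∏ j, ENNReal.ofReal ((n j : ℝ))⁻¹).toReal
      = (T.card : ℝ) * ∏ j, ((n j : ℝ))⁻¹ := by
    rw [ENNReal.toReal_mul, ENNReal.toReal_natCast, ENNReal.toReal_prod]
    congr 1
    exact Finset.prod_congr rfl fun j _ => ENNReal.toReal_ofReal (by positivity)
  rw [hlhs] at hfinal
  have hcard : (Set.ncard M : ℝ) = (T.card : ℝ) := by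
    rw [Set.ncard_eq_toFinset_card M hMfin]
  rw [hcard, div_eq_mul_inv, ← Finset.prod_inv_distrib]
  exact hfinal

theorem grid_mismatch_count_little_o (d : ℕ) (Ω : Set (Fin d → ℝ))
    (hΩsub : Ω ⊆ Set.Icc 0 1) (hPJ : volume (frontier Ω) = 0) :
    Tendsto
      (fun n : Fin d → ℕ =>
        (Set.ncard {i : Fin d → ℕ |
            (∀ j, 1 ≤ i j ∧ i j ≤ n j) ∧
              ¬(((fun j => (i j : ℝ) / (n j : ℝ)) ∈ Ω) ↔
                ((fun j => (i j : ℝ) / ((n j : ℝ) + 1)) ∈ Ω))} : ℝ)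
          / ∏ j, (n j : ℝ))
      atTop (nhds 0) := by
  have hFsub : frontier Ω ⊆ Set.Icc 0 1 := by
    have h1 : closure Ω ⊆ closure (Set.Icc (0 : Fin d → ℝ) 1) := closure_mono hΩsub
    rw [IsClosed.closure_eq isClosed_Icc] at h1
    exact subset_trans frontier_subset_closure h1
  have hFc : IsCompact (frontier Ω) :=
    IsCompact.of_isClosed_subset isCompact_Icc isClosed_frontier hFsub
  have hδ : Tendsto (fun n : Fin d → ℕ => 2 * ∑ j, ((n j : ℝ))⁻¹) atTop (nhds 0) := by
    have hsum : Tendsto (fun n : Fin d → ℕ => ∑ j, ((n j : ℝ))⁻¹) atTop (nhds 0) := by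
      have h := tendsto_finset_sum (f := fun (j : Fin d) (n : Fin d → ℕ) => ((n j : ℝ))⁻¹)
        Finset.univ (fun j _ =>
          tendsto_inv_atTop_nhds_zero_nat.comp
            (tendsto_atTop_atTop.2 fun b => ⟨fun _ => b, fun m hm => hm j⟩))
      simpa using h
    have := hsum.const_mul (2 : ℝ)
    simpa using this
  have hmeas : Tendsto (fun r : ℝ => (volume (Metric.cthickening r (frontier Ω))).toReal)
      (nhds 0) (nhds 0) := by
    have h1 := tendsto_measure_cthickening_of_isCompact (μ := volume) hFc
    rw [hPJ] at h1
    have h2 := (ENNReal.tendsto_toReal (a := 0) (by simp)).comp h1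
    simpa [Function.comp_def] using h2
  have hbound := hmeas.comp hδ
  refine squeeze_zero' ?_ ?_ hbound
  · filter_upwards with n
    positivity
  · filter_upwards [eventually_ge_atTop (1 : Fin d → ℕ)] with n hn
    exact key_bound d Ω hΩsub n (fun j => hn j)
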